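/- Let A be the Cartan matrix of type E₇ (Bourbaki numbering). Let s, r₁, r₂, r₃, r₄ be real numbers with s ≥ 1/2, 0 ≤ r₁ < 1/2, 0 ≤ r₄ < 1/2, and 0 ≤ r₃ ≤ r₂ < 1/2, and let c = (4s + r₁, 6s + r₄, 8s + r₁, 12s, 9s + r₂, 6s + r₂ + r₃, 3s + r₂) ∈ ℝ⁷. Then for every m ∈ ℤ⁷ with all entries nonnegative and mᵀA m = 2 (i.e., for every positive root of E₇ written in the basis of simple roots), one has cᵀ(A m) > −1. Moreover, for m = e₄ = (0,0,0,1,0,0,0), cᵀ(A e₄) = s − (r₁ + r₂ + r₄). -/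

import Mathlib

set_option synthInstance.maxSize 10000 in
set_option synthInstance.maxHeartbeats 1000000 in
set_option maxHeartbeats 1000000 in
theorem e7_enum_fin : ∀ (a b : Fin 3) (c : Fin 4) (d : Fin 5) (e : Fin 4) (f : Fin 3) (g : Fin 2),
    2*(a.1*a.1+b.1*b.1+c.1*c.1+d.1*d.1+e.1*e.1+f.1*f.1+g.1*g.1) = 2*(a.1*c.1+b.1*d.1+c.1*d.1+d.1*e.1+e.1*f.1+f.1*g.1) + 2 →
    (a.1 = 0 ∧ b.1 = 0 ∧ c.1 = 0 ∧ d.1 = 0 ∧ e.1 = 0 ∧ f.1 = 0 ∧ g.1 = 1) ∨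
    (a.1 = 0 ∧ b.1 = 0 ∧ c.1 = 0 ∧ d.1 = 0 ∧ e.1 = 0 ∧ f.1 = 1 ∧ g.1 = 0) ∨
    (a.1 = 0 ∧ b.1 = 0 ∧ c.1 = 0 ∧ d.1 = 0 ∧ e.1 = 0 ∧ f.1 = 1 ∧ g.1 = 1) ∨
    (a.1 = 0 ∧ b.1 = 0 ∧ c.1 = 0 ∧ d.1 = 0 ∧ e.1 = 1 ∧ f.1 = 0 ∧ g.1 = 0) ∨
    (a.1 = 0 ∧ b.1 = 0 ∧ c.1 = 0 ∧ d.1 = 0 ∧ e.1 = 1 ∧ f.1 = 1 ∧ g.1 = 0) ∨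
    (a.1 = 0 ∧ b.1 = 0 ∧ c.1 = 0 ∧ d.1 = 0 ∧ e.1 = 1 ∧ f.1 = 1 ∧ g.1 = 1) ∨
    (a.1 = 0 ∧ b.1 = 0 ∧ c.1 = 0 ∧ d.1 = 1 ∧ e.1 = 0 ∧ f.1 = 0 ∧ g.1 = 0) ∨
    (a.1 = 0 ∧ b.1 = 0 ∧ c.1 = 0 ∧ d.1 = 1 ∧ e.1 = 1 ∧ f.1 = 0 ∧ g.1 = 0) ∨
    (a.1 = 0 ∧ b.1 = 0 ∧ c.1 = 0 ∧ d.1 = 1 ∧ e.1 = 1 ∧ f.1 = 1 ∧ g.1 = 0) ∨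
    (a.1 = 0 ∧ b.1 = 0 ∧ c.1 = 0 ∧ d.1 = 1 ∧ e.1 = 1 ∧ f.1 = 1 ∧ g.1 = 1) ∨
    (a.1 = 0 ∧ b.1 = 0 ∧ c.1 = 1 ∧ d.1 = 0 ∧ e.1 = 0 ∧ f.1 = 0 ∧ g.1 = 0) ∨
    (a.1 = 0 ∧ b.1 = 0 ∧ c.1 = 1 ∧ d.1 = 1 ∧ e.1 = 0 ∧ f.1 = 0 ∧ g.1 = 0) ∨
    (a.1 = 0 ∧ b.1 = 0 ∧ c.1 = 1 ∧ d.1 = 1 ∧ e.1 = 1 ∧ f.1 = 0 ∧ g.1 = 0) ∨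
    (a.1 = 0 ∧ b.1 = 0 ∧ c.1 = 1 ∧ d.1 = 1 ∧ e.1 = 1 ∧ f.1 = 1 ∧ g.1 = 0) ∨
    (a.1 = 0 ∧ b.1 = 0 ∧ c.1 = 1 ∧ d.1 = 1 ∧ e.1 = 1 ∧ f.1 = 1 ∧ g.1 = 1) ∨
    (a.1 = 0 ∧ b.1 = 1 ∧ c.1 = 0 ∧ d.1 = 0 ∧ e.1 = 0 ∧ f.1 = 0 ∧ g.1 = 0) ∨
    (a.1 = 0 ∧ b.1 = 1 ∧ c.1 = 0 ∧ d.1 = 1 ∧ e.1 = 0 ∧ f.1 = 0 ∧ g.1 = 0) ∨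
    (a.1 = 0 ∧ b.1 = 1 ∧ c.1 = 0 ∧ d.1 = 1 ∧ e.1 = 1 ∧ f.1 = 0 ∧ g.1 = 0) ∨
    (a.1 = 0 ∧ b.1 = 1 ∧ c.1 = 0 ∧ d.1 = 1 ∧ e.1 = 1 ∧ f.1 = 1 ∧ g.1 = 0) ∨
    (a.1 = 0 ∧ b.1 = 1 ∧ c.1 = 0 ∧ d.1 = 1 ∧ e.1 = 1 ∧ f.1 = 1 ∧ g.1 = 1) ∨
    (a.1 = 0 ∧ b.1 = 1 ∧ c.1 = 1 ∧ d.1 = 1 ∧ e.1 = 0 ∧ f.1 = 0 ∧ g.1 = 0) ∨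
    (a.1 = 0 ∧ b.1 = 1 ∧ c.1 = 1 ∧ d.1 = 1 ∧ e.1 = 1 ∧ f.1 = 0 ∧ g.1 = 0) ∨
    (a.1 = 0 ∧ b.1 = 1 ∧ c.1 = 1 ∧ d.1 = 1 ∧ e.1 = 1 ∧ f.1 = 1 ∧ g.1 = 0) ∨
    (a.1 = 0 ∧ b.1 = 1 ∧ c.1 = 1 ∧ d.1 = 1 ∧ e.1 = 1 ∧ f.1 = 1 ∧ g.1 = 1) ∨
    (a.1 = 0 ∧ b.1 = 1 ∧ c.1 = 1 ∧ d.1 = 2 ∧ e.1 = 1 ∧ f.1 = 0 ∧ g.1 = 0) ∨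
    (a.1 = 0 ∧ b.1 = 1 ∧ c.1 = 1 ∧ d.1 = 2 ∧ e.1 = 1 ∧ f.1 = 1 ∧ g.1 = 0) ∨
    (a.1 = 0 ∧ b.1 = 1 ∧ c.1 = 1 ∧ d.1 = 2 ∧ e.1 = 1 ∧ f.1 = 1 ∧ g.1 = 1) ∨
    (a.1 = 0 ∧ b.1 = 1 ∧ c.1 = 1 ∧ d.1 = 2 ∧ e.1 = 2 ∧ f.1 = 1 ∧ g.1 = 0) ∨
    (a.1 = 0 ∧ b.1 = 1 ∧ c.1 = 1 ∧ d.1 = 2 ∧ e.1 = 2 ∧ f.1 = 1 ∧ g.1 = 1) ∨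
    (a.1 = 0 ∧ b.1 = 1 ∧ c.1 = 1 ∧ d.1 = 2 ∧ e.1 = 2 ∧ f.1 = 2 ∧ g.1 = 1) ∨
    (a.1 = 1 ∧ b.1 = 0 ∧ c.1 = 0 ∧ d.1 = 0 ∧ e.1 = 0 ∧ f.1 = 0 ∧ g.1 = 0) ∨
    (a.1 = 1 ∧ b.1 = 0 ∧ c.1 = 1 ∧ d.1 = 0 ∧ e.1 = 0 ∧ f.1 = 0 ∧ g.1 = 0) ∨
    (a.1 = 1 ∧ b.1 = 0 ∧ c.1 = 1 ∧ d.1 = 1 ∧ e.1 = 0 ∧ f.1 = 0 ∧ g.1 = 0) ∨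
    (a.1 = 1 ∧ b.1 = 0 ∧ c.1 = 1 ∧ d.1 = 1 ∧ e.1 = 1 ∧ f.1 = 0 ∧ g.1 = 0) ∨
    (a.1 = 1 ∧ b.1 = 0 ∧ c.1 = 1 ∧ d.1 = 1 ∧ e.1 = 1 ∧ f.1 = 1 ∧ g.1 = 0) ∨
    (a.1 = 1 ∧ b.1 = 0 ∧ c.1 = 1 ∧ d.1 = 1 ∧ e.1 = 1 ∧ f.1 = 1 ∧ g.1 = 1) ∨
    (a.1 = 1 ∧ b.1 = 1 ∧ c.1 = 1 ∧ d.1 = 1 ∧ e.1 = 0 ∧ f.1 = 0 ∧ g.1 = 0) ∨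
    (a.1 = 1 ∧ b.1 = 1 ∧ c.1 = 1 ∧ d.1 = 1 ∧ e.1 = 1 ∧ f.1 = 0 ∧ g.1 = 0) ∨
    (a.1 = 1 ∧ b.1 = 1 ∧ c.1 = 1 ∧ d.1 = 1 ∧ e.1 = 1 ∧ f.1 = 1 ∧ g.1 = 0) ∨
    (a.1 = 1 ∧ b.1 = 1 ∧ c.1 = 1 ∧ d.1 = 1 ∧ e.1 = 1 ∧ f.1 = 1 ∧ g.1 = 1) ∨
    (a.1 = 1 ∧ b.1 = 1 ∧ c.1 = 1 ∧ d.1 = 2 ∧ e.1 = 1 ∧ f.1 = 0 ∧ g.1 = 0) ∨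
    (a.1 = 1 ∧ b.1 = 1 ∧ c.1 = 1 ∧ d.1 = 2 ∧ e.1 = 1 ∧ f.1 = 1 ∧ g.1 = 0) ∨
    (a.1 = 1 ∧ b.1 = 1 ∧ c.1 = 1 ∧ d.1 = 2 ∧ e.1 = 1 ∧ f.1 = 1 ∧ g.1 = 1) ∨
    (a.1 = 1 ∧ b.1 = 1 ∧ c.1 = 1 ∧ d.1 = 2 ∧ e.1 = 2 ∧ f.1 = 1 ∧ g.1 = 0) ∨
    (a.1 = 1 ∧ b.1 = 1 ∧ c.1 = 1 ∧ d.1 = 2 ∧ e.1 = 2 ∧ f.1 = 1 ∧ g.1 = 1) ∨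
    (a.1 = 1 ∧ b.1 = 1 ∧ c.1 = 1 ∧ d.1 = 2 ∧ e.1 = 2 ∧ f.1 = 2 ∧ g.1 = 1) ∨
    (a.1 = 1 ∧ b.1 = 1 ∧ c.1 = 2 ∧ d.1 = 2 ∧ e.1 = 1 ∧ f.1 = 0 ∧ g.1 = 0) ∨
    (a.1 = 1 ∧ b.1 = 1 ∧ c.1 = 2 ∧ d.1 = 2 ∧ e.1 = 1 ∧ f.1 = 1 ∧ g.1 = 0) ∨
    (a.1 = 1 ∧ b.1 = 1 ∧ c.1 = 2 ∧ d.1 = 2 ∧ e.1 = 1 ∧ f.1 = 1 ∧ g.1 = 1) ∨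
    (a.1 = 1 ∧ b.1 = 1 ∧ c.1 = 2 ∧ d.1 = 2 ∧ e.1 = 2 ∧ f.1 = 1 ∧ g.1 = 0) ∨
    (a.1 = 1 ∧ b.1 = 1 ∧ c.1 = 2 ∧ d.1 = 2 ∧ e.1 = 2 ∧ f.1 = 1 ∧ g.1 = 1) ∨
    (a.1 = 1 ∧ b.1 = 1 ∧ c.1 = 2 ∧ d.1 = 2 ∧ e.1 = 2 ∧ f.1 = 2 ∧ g.1 = 1) ∨
    (a.1 = 1 ∧ b.1 = 1 ∧ c.1 = 2 ∧ d.1 = 3 ∧ e.1 = 2 ∧ f.1 = 1 ∧ g.1 = 0) ∨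
    (a.1 = 1 ∧ b.1 = 1 ∧ c.1 = 2 ∧ d.1 = 3 ∧ e.1 = 2 ∧ f.1 = 1 ∧ g.1 = 1) ∨
    (a.1 = 1 ∧ b.1 = 1 ∧ c.1 = 2 ∧ d.1 = 3 ∧ e.1 = 2 ∧ f.1 = 2 ∧ g.1 = 1) ∨
    (a.1 = 1 ∧ b.1 = 1 ∧ c.1 = 2 ∧ d.1 = 3 ∧ e.1 = 3 ∧ f.1 = 2 ∧ g.1 = 1) ∨
    (a.1 = 1 ∧ b.1 = 2 ∧ c.1 = 2 ∧ d.1 = 3 ∧ e.1 = 2 ∧ f.1 = 1 ∧ g.1 = 0) ∨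
    (a.1 = 1 ∧ b.1 = 2 ∧ c.1 = 2 ∧ d.1 = 3 ∧ e.1 = 2 ∧ f.1 = 1 ∧ g.1 = 1) ∨
    (a.1 = 1 ∧ b.1 = 2 ∧ c.1 = 2 ∧ d.1 = 3 ∧ e.1 = 2 ∧ f.1 = 2 ∧ g.1 = 1) ∨
    (a.1 = 1 ∧ b.1 = 2 ∧ c.1 = 2 ∧ d.1 = 3 ∧ e.1 = 3 ∧ f.1 = 2 ∧ g.1 = 1) ∨
    (a.1 = 1 ∧ b.1 = 2 ∧ c.1 = 2 ∧ d.1 = 4 ∧ e.1 = 3 ∧ f.1 = 2 ∧ g.1 = 1) ∨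
    (a.1 = 1 ∧ b.1 = 2 ∧ c.1 = 3 ∧ d.1 = 4 ∧ e.1 = 3 ∧ f.1 = 2 ∧ g.1 = 1) ∨
    (a.1 = 2 ∧ b.1 = 2 ∧ c.1 = 3 ∧ d.1 = 4 ∧ e.1 = 3 ∧ f.1 = 2 ∧ g.1 = 1) := by decide

/-- The Cartan matrix of type `E₇` in Bourbaki numbering. -/
def cartanE7 : Matrix (Fin 7) (Fin 7) ℝ :=
  !![ 2,  0, -1,  0,  0,  0,  0;
      0,  2,  0, -1,  0,  0,  0;
     -1,  0,  2, -1,  0,  0,  0;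
      0, -1, -1,  2, -1,  0,  0;
      0,  0,  0, -1,  2, -1,  0;
      0,  0,  0,  0, -1,  2, -1;
      0,  0,  0,  0,  0, -1,  2]

set_option maxHeartbeats 4000000 in
/-- For `E₇` (Bourbaki numbering), with `s ≥ 1/2`, `0 ≤ r₁ < 1/2`, `0 ≤ r₄ < 1/2`,
`0 ≤ r₃ ≤ r₂ < 1/2`, and `c = (4s+r₁, 6s+r₄, 8s+r₁, 12s, 9s+r₂, 6s+r₂+r₃, 3s+r₂)`,
the pairing `cᵀ (A m)` is `> −1` for every positive root `m` (nonnegative integer vector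
with `mᵀ A m = 2`), and for `m = e₄` it equals `s − (r₁ + r₂ + r₄)`. -/
theorem e7_case_pairing_bound (s r₁ r₂ r₃ r₄ : ℝ)
    (hs : 1 / 2 ≤ s)
    (hr₁ : 0 ≤ r₁) (hr₁' : r₁ < 1 / 2)
    (hr₄ : 0 ≤ r₄) (hr₄' : r₄ < 1 / 2)
    (hr₃ : 0 ≤ r₃) (hr₃₂ : r₃ ≤ r₂) (hr₂' : r₂ < 1 / 2)
    (c : Fin 7 → ℝ)
    (hc : c = ![4 * s + r₁, 6 * s + r₄, 8 * s + r₁, 12 * s, 9 * s + r₂,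
                6 * s + r₂ + r₃, 3 * s + r₂]) :
    (∀ m : Fin 7 → ℤ, (∀ i, 0 ≤ m i) →
      dotProduct (fun i => (m i : ℝ)) (cartanE7.mulVec fun i => (m i : ℝ)) = 2 →
      -1 < dotProduct c (cartanE7.mulVec fun i => (m i : ℝ))) ∧
    dotProduct c (cartanE7.mulVec (Pi.single 3 1)) = s - (r₁ + r₂ + r₄) := by
  subst hc
  constructor
  · intro m hm hq
    have e5 : (5 : Fin 7) = (((((0 : Fin 2).succ).succ).succ).succ).succ := by decide
    have e6 : (6 : Fin 7) = ((((((0 : Fin 1).succ).succ).succ).succ).succ).succ := by decide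
    simp only [cartanE7, Matrix.mulVec, dotProduct, Fin.sum_univ_seven, e5, e6,
      Matrix.cons_val_succ, Matrix.cons_val_zero, Matrix.cons_val_one, Matrix.head_cons,
      Matrix.cons_val_two, Matrix.tail_cons, Matrix.cons_val_three, Matrix.cons_val_four,
      Matrix.vecHead, Matrix.vecTail, Matrix.of_apply, Function.comp] at hq ⊢
    try simp only [← e5, ← e6] at hq ⊢
    have hqZ : 2*(m 0)*(m 0) + 2*(m 1)*(m 1) + 2*(m 2)*(m 2) + 2*(m 3)*(m 3)
        + 2*(m 4)*(m 4) + 2*(m 5)*(m 5) + 2*(m 6)*(m 6)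
        - 2*(m 0)*(m 2) - 2*(m 1)*(m 3) - 2*(m 2)*(m 3) - 2*(m 3)*(m 4)
        - 2*(m 4)*(m 5) - 2*(m 5)*(m 6) = 2 := by
      have h : ((2*(m 0)*(m 0) + 2*(m 1)*(m 1) + 2*(m 2)*(m 2) + 2*(m 3)*(m 3)
        + 2*(m 4)*(m 4) + 2*(m 5)*(m 5) + 2*(m 6)*(m 6)
        - 2*(m 0)*(m 2) - 2*(m 1)*(m 3) - 2*(m 2)*(m 3) - 2*(m 3)*(m 4)
        - 2*(m 4)*(m 5) - 2*(m 5)*(m 6) : ℤ) : ℝ) = ((2 : ℤ) : ℝ) := by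
        push_cast
        linear_combination hq
      exact_mod_cast h
    set n1 := m 0 with hn1; set n2 := m 1 with hn2; set n3 := m 2 with hn3
    set n4 := m 3 with hn4; set n5 := m 4 with hn5; set n6 := m 5 with hn6
    set n7 := m 6 with hn7
    have h1 := hm 0; have h2 := hm 1; have h3 := hm 2; have h4 := hm 3
    have h5 := hm 4; have h6 := hm 5; have h7 := hm 6
    simp only [← hn1, ← hn2, ← hn3, ← hn4, ← hn5, ← hn6, ← hn7] at h1 h2 h3 h4 h5 h6 h7
    have hb1 : n1 ≤ 2 := by nlinarith [sq_nonneg (2 * n2 - n4), sq_nonneg (- n1 + 2 * n3 - n4), sq_nonneg (- n1 + 2 * n4 - 2 * n5), sq_nonneg (- n1 + 2 * n5 - 2 * n6), sq_nonneg (- n1 + 2 * n6 - 2 * n7), sq_nonneg (- n1 + 2 * n7)]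
    have hb2 : n2 ≤ 2 := by nlinarith [sq_nonneg (2 * n1 - n3), sq_nonneg (3 * n3 - 2 * n4), sq_nonneg (- 3 * n2 + 4 * n4 - 3 * n5), sq_nonneg (- 3 * n2 + 5 * n5 - 4 * n6), sq_nonneg (- 3 * n2 + 6 * n6 - 5 * n7), sq_nonneg (- 3 * n2 + 7 * n7)]
    have hb3 : n3 ≤ 3 := by nlinarith [sq_nonneg (2 * n1 - n3), sq_nonneg (2 * n2 - n4), sq_nonneg (- 2 * n3 + 3 * n4 - 2 * n5), sq_nonneg (- 2 * n3 + 4 * n5 - 3 * n6), sq_nonneg (- 2 * n3 + 5 * n6 - 4 * n7), sq_nonneg (- n3 + 3 * n7)]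
    have hb4 : n4 ≤ 4 := by nlinarith [sq_nonneg (2 * n1 - n3), sq_nonneg (2 * n2 - n4), sq_nonneg (3 * n3 - 2 * n4), sq_nonneg (- n4 + 2 * n5 - n6), sq_nonneg (- n4 + 3 * n6 - 2 * n7), sq_nonneg (- n4 + 4 * n7)]
    have hb5 : n5 ≤ 3 := by nlinarith [sq_nonneg (2 * n1 - n3), sq_nonneg (2 * n2 - n4), sq_nonneg (3 * n3 - 2 * n4), sq_nonneg (5 * n4 - 6 * n5), sq_nonneg (- n5 + 2 * n6 - n7), sq_nonneg (- n5 + 3 * n7)]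
    have hb6 : n6 ≤ 2 := by nlinarith [sq_nonneg (2 * n1 - n3), sq_nonneg (2 * n2 - n4), sq_nonneg (3 * n3 - 2 * n4), sq_nonneg (5 * n4 - 6 * n5), sq_nonneg (4 * n5 - 5 * n6), sq_nonneg (- n6 + 2 * n7)]
    have hb7 : n7 ≤ 1 := by nlinarith [sq_nonneg (2 * n1 - n3), sq_nonneg (2 * n2 - n4), sq_nonneg (3 * n3 - 2 * n4), sq_nonneg (5 * n4 - 6 * n5), sq_nonneg (4 * n5 - 5 * n6), sq_nonneg (3 * n6 - 4 * n7)]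
    have hqN : 2*(n1.toNat*n1.toNat+n2.toNat*n2.toNat+n3.toNat*n3.toNat+n4.toNat*n4.toNat
        +n5.toNat*n5.toNat+n6.toNat*n6.toNat+n7.toNat*n7.toNat)
        = 2*(n1.toNat*n3.toNat+n2.toNat*n4.toNat+n3.toNat*n4.toNat+n4.toNat*n5.toNat
        +n5.toNat*n6.toNat+n6.toNat*n7.toNat) + 2 := by
      have h : ((2*(n1.toNat*n1.toNat+n2.toNat*n2.toNat+n3.toNat*n3.toNat+n4.toNat*n4.toNat
        +n5.toNat*n5.toNat+n6.toNat*n6.toNat+n7.toNat*n7.toNat) : ℕ) : ℤ)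
        = ((2*(n1.toNat*n3.toNat+n2.toNat*n4.toNat+n3.toNat*n4.toNat+n4.toNat*n5.toNat
        +n5.toNat*n6.toNat+n6.toNat*n7.toNat) + 2 : ℕ) : ℤ) := by
        push_cast [Int.toNat_of_nonneg h1, Int.toNat_of_nonneg h2, Int.toNat_of_nonneg h3,
          Int.toNat_of_nonneg h4, Int.toNat_of_nonneg h5, Int.toNat_of_nonneg h6,
          Int.toNat_of_nonneg h7]
        linear_combination hqZ
      exact_mod_cast h
    have key := e7_enum_fin ⟨n1.toNat, by omega⟩ ⟨n2.toNat, by omega⟩ ⟨n3.toNat, by omega⟩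
      ⟨n4.toNat, by omega⟩ ⟨n5.toNat, by omega⟩ ⟨n6.toNat, by omega⟩ ⟨n7.toNat, by omega⟩ hqN
    simp only [Fin.val_mk] at key
    have c1 : ((n1.toNat : ℕ) : ℝ) = ((n1 : ℤ) : ℝ) := by
      exact_mod_cast Int.toNat_of_nonneg h1
    have c2 : ((n2.toNat : ℕ) : ℝ) = ((n2 : ℤ) : ℝ) := by
      exact_mod_cast Int.toNat_of_nonneg h2
    have c3 : ((n3.toNat : ℕ) : ℝ) = ((n3 : ℤ) : ℝ) := by
      exact_mod_cast Int.toNat_of_nonneg h3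
    have c4 : ((n4.toNat : ℕ) : ℝ) = ((n4 : ℤ) : ℝ) := by
      exact_mod_cast Int.toNat_of_nonneg h4
    have c5 : ((n5.toNat : ℕ) : ℝ) = ((n5 : ℤ) : ℝ) := by
      exact_mod_cast Int.toNat_of_nonneg h5
    have c6 : ((n6.toNat : ℕ) : ℝ) = ((n6 : ℤ) : ℝ) := by
      exact_mod_cast Int.toNat_of_nonneg h6
    have c7 : ((n7.toNat : ℕ) : ℝ) = ((n7 : ℤ) : ℝ) := by
      exact_mod_cast Int.toNat_of_nonneg h7
    rw [← c1, ← c2, ← c3, ← c4, ← c5, ← c6, ← c7]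
    rcases key with (⟨e1,e2,e3,e4,e5',e6',e7'⟩ |
      ⟨e1,e2,e3,e4,e5',e6',e7'⟩ |
      ⟨e1,e2,e3,e4,e5',e6',e7'⟩ |
      ⟨e1,e2,e3,e4,e5',e6',e7'⟩ |
      ⟨e1,e2,e3,e4,e5',e6',e7'⟩ |
      ⟨e1,e2,e3,e4,e5',e6',e7'⟩ |
      ⟨e1,e2,e3,e4,e5',e6',e7'⟩ |
      ⟨e1,e2,e3,e4,e5',e6',e7'⟩ |
      ⟨e1,e2,e3,e4,e5',e6',e7'⟩ |
      ⟨e1,e2,e3,e4,e5',e6',e7'⟩ |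
      ⟨e1,e2,e3,e4,e5',e6',e7'⟩ |
      ⟨e1,e2,e3,e4,e5',e6',e7'⟩ |
      ⟨e1,e2,e3,e4,e5',e6',e7'⟩ |
      ⟨e1,e2,e3,e4,e5',e6',e7'⟩ |
      ⟨e1,e2,e3,e4,e5',e6',e7'⟩ |
      ⟨e1,e2,e3,e4,e5',e6',e7'⟩ |
      ⟨e1,e2,e3,e4,e5',e6',e7'⟩ |
      ⟨e1,e2,e3,e4,e5',e6',e7'⟩ |
      ⟨e1,e2,e3,e4,e5',e6',e7'⟩ |
      ⟨e1,e2,e3,e4,e5',e6',e7'⟩ |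
      ⟨e1,e2,e3,e4,e5',e6',e7'⟩ |
      ⟨e1,e2,e3,e4,e5',e6',e7'⟩ |
      ⟨e1,e2,e3,e4,e5',e6',e7'⟩ |
      ⟨e1,e2,e3,e4,e5',e6',e7'⟩ |
      ⟨e1,e2,e3,e4,e5',e6',e7'⟩ |
      ⟨e1,e2,e3,e4,e5',e6',e7'⟩ |
      ⟨e1,e2,e3,e4,e5',e6',e7'⟩ |
      ⟨e1,e2,e3,e4,e5',e6',e7'⟩ |
      ⟨e1,e2,e3,e4,e5',e6',e7'⟩ |
      ⟨e1,e2,e3,e4,e5',e6',e7'⟩ |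
      ⟨e1,e2,e3,e4,e5',e6',e7'⟩ |
      ⟨e1,e2,e3,e4,e5',e6',e7'⟩ |
      ⟨e1,e2,e3,e4,e5',e6',e7'⟩ |
      ⟨e1,e2,e3,e4,e5',e6',e7'⟩ |
      ⟨e1,e2,e3,e4,e5',e6',e7'⟩ |
      ⟨e1,e2,e3,e4,e5',e6',e7'⟩ |
      ⟨e1,e2,e3,e4,e5',e6',e7'⟩ |
      ⟨e1,e2,e3,e4,e5',e6',e7'⟩ |
      ⟨e1,e2,e3,e4,e5',e6',e7'⟩ |
      ⟨e1,e2,e3,e4,e5',e6',e7'⟩ |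
      ⟨e1,e2,e3,e4,e5',e6',e7'⟩ |
      ⟨e1,e2,e3,e4,e5',e6',e7'⟩ |
      ⟨e1,e2,e3,e4,e5',e6',e7'⟩ |
      ⟨e1,e2,e3,e4,e5',e6',e7'⟩ |
      ⟨e1,e2,e3,e4,e5',e6',e7'⟩ |
      ⟨e1,e2,e3,e4,e5',e6',e7'⟩ |
      ⟨e1,e2,e3,e4,e5',e6',e7'⟩ |
      ⟨e1,e2,e3,e4,e5',e6',e7'⟩ |
      ⟨e1,e2,e3,e4,e5',e6',e7'⟩ |
      ⟨e1,e2,e3,e4,e5',e6',e7'⟩ |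
      ⟨e1,e2,e3,e4,e5',e6',e7'⟩ |
      ⟨e1,e2,e3,e4,e5',e6',e7'⟩ |
      ⟨e1,e2,e3,e4,e5',e6',e7'⟩ |
      ⟨e1,e2,e3,e4,e5',e6',e7'⟩ |
      ⟨e1,e2,e3,e4,e5',e6',e7'⟩ |
      ⟨e1,e2,e3,e4,e5',e6',e7'⟩ |
      ⟨e1,e2,e3,e4,e5',e6',e7'⟩ |
      ⟨e1,e2,e3,e4,e5',e6',e7'⟩ |
      ⟨e1,e2,e3,e4,e5',e6',e7'⟩ |
      ⟨e1,e2,e3,e4,e5',e6',e7'⟩ |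
      ⟨e1,e2,e3,e4,e5',e6',e7'⟩ |
      ⟨e1,e2,e3,e4,e5',e6',e7'⟩ |
      ⟨e1,e2,e3,e4,e5',e6',e7'⟩) <;>
      rw [e1, e2, e3, e4, e5', e6', e7'] <;> push_cast <;> linarith
  · have e5 : (5 : Fin 7) = (((((0 : Fin 2).succ).succ).succ).succ).succ := by decide
    have e6 : (6 : Fin 7) = ((((((0 : Fin 1).succ).succ).succ).succ).succ).succ := by decide
    simp [cartanE7, Matrix.mulVec_single, dotProduct, Fin.sum_univ_seven, e5, e6,
      Matrix.cons_val_succ, Matrix.vecHead, Matrix.vecTail, Pi.single_apply]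
    ring
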